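/- Let N ≥ 5 be an integer, let ℓ be an integer with 1 ≤ ℓ and 4ℓ ≤ N, and set β = 1 − 1/N. Then β^{−ℓ} · (1 + (ℓ/N)·β^ℓ/(1 − β^ℓ))² < 4.7. In particular, this quantity is at most (5/4)^{5/4}·(1 + (5/4)·ln(5/4)/((5/4)^{5/4} − 1))² ≈ 4.607. -/

import Mathlib

set_option maxHeartbeats 1000000
open Real

lemma expUB4 {x : ℝ} (h0 : 0 ≤ x) (h1 : x ≤ 1) :
    Real.exp x ≤ 1 + x + x^2/2 + x^3/6 + x^4*(5/96) := by
  have h := Real.exp_bound' h0 h1 (n := 4) (by norm_num)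
  simp [Finset.sum_range_succ, Nat.factorial] at h
  nlinarith [h]

lemma bern2 (m : ℕ) {x : ℝ} (hx : 0 ≤ x) :
    1 + m*x + m*(m-1)*x^2/2 ≤ (1+x)^m := by
  induction m with
  | zero => norm_num
  | succ k ih =>
    calc (1:ℝ) + (k+1:ℕ)*x + (k+1:ℕ)*((k+1:ℕ)-1)*x^2/2
        ≤ (1 + k*x + k*((k:ℝ)-1)*x^2/2) * (1+x) := by
          have h3 : 0 ≤ (k:ℝ)*((k:ℝ)-1) := by
            rcases Nat.eq_zero_or_pos k with h | h
            · simp [h]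
            · have hk1 : (1:ℝ) ≤ (k:ℝ) := by exact_mod_cast h
              nlinarith
          push_cast
          nlinarith [mul_nonneg h3 (pow_nonneg hx 3)]
      _ ≤ (1+x)^k * (1+x) := mul_le_mul_of_nonneg_right ih (by linarith)
      _ = (1+x)^(k+1) := by ring

lemma polyA {u : ℝ} (h0 : 0 ≤ u) (h1 : u ≤ 1/4) :
    (1+u+u^2/2+u^3/6+u^4*(5/96))*(4+u)^2 ≤ (4.6)*(2+u)^2 := by
  nlinarith [sq_nonneg u, sq_nonneg (u-1/4), mul_nonneg h0 h0, pow_nonneg h0 3,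
    pow_nonneg h0 4, pow_nonneg h0 5, pow_nonneg h0 6,
    mul_nonneg (mul_nonneg h0 h0) (sub_nonneg.2 h1)]

lemma polyB {u : ℝ} (h0 : 1/4 ≤ u) (h1 : u ≤ 5/16) :
    (1+u+u^2/2+u^3/6+u^4*(5/96))*(6*u*(1-u)+1)^2 ≤ (4.6)*(6*u*(1-u))^2 := by
  have ha : 0 ≤ u - 1/4 := by linarith
  have hb : 0 ≤ 5/16 - u := by linarith
  nlinarith [mul_nonneg (pow_nonneg ha 1) hb, mul_nonneg (pow_nonneg ha 2) hb,
    mul_nonneg (pow_nonneg ha 3) hb, mul_nonneg (pow_nonneg ha 4) hb,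
    mul_nonneg (pow_nonneg ha 5) hb, mul_nonneg (pow_nonneg ha 6) hb,
    mul_nonneg (pow_nonneg ha 7) hb, pow_nonneg ha 2, pow_nonneg ha 3, ha, hb]

lemma main_bound (N ℓ : ℕ) (hN : 5 ≤ N) (hl : 1 ≤ ℓ) (hlN : 4 * ℓ ≤ N)
    (β : ℝ) (hβ : β = 1 - 1 / (N : ℝ)) :
    (β ^ ℓ)⁻¹ * (1 + ((ℓ : ℝ) / (N : ℝ)) * β ^ ℓ / (1 - β ^ ℓ)) ^ 2 ≤ 4.6 := by
  have hn5 : (5:ℝ) ≤ (N:ℝ) := by exact_mod_cast hN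
  have hL1 : (1:ℝ) ≤ (ℓ:ℝ) := by exact_mod_cast hl
  have h4L : 4*(ℓ:ℝ) ≤ (N:ℝ) := by exact_mod_cast hlN
  set n := (N:ℝ) with hn_def
  set L := (ℓ:ℝ) with hL_def
  have hn1 : (0:ℝ) < n - 1 := by linarith
  set d := 1/(n-1) with hd_def
  have hd0 : 0 < d := by positivity
  have hd4 : d ≤ 1/4 := by
    rw [hd_def, div_le_div_iff₀ hn1 (by norm_num)]
    linarith
  set u := L*d with hu_def
  have hu0 : 0 < u := by
    have : (0:ℝ) < L := by linarith
    exact mul_pos this hd0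
  have hdu : d ≤ u := by
    rw [hu_def]
    nlinarith
  have hnd : n*d = 1 + d := by
    rw [hd_def]
    field_simp
    ring
  have hu4L : 4*u ≤ 1 + d := by
    rw [hu_def, ← hnd]
    nlinarith
  have hu516 : u ≤ 5/16 := by linarith
  have h1n : 1/n ≤ 1/5 := by
    rw [div_le_div_iff₀ (by linarith) (by norm_num)]
    linarith
  have hn0 : (0:ℝ) < n := by linarith
  have hβpos : 0 < β := by
    rw [hβ]
    linarith
  have hβ1 : β < 1 := by
    rw [hβ]
    have : 0 < 1/n := by positivity
    linarith
  have hβinv : β⁻¹ = 1 + d := by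
    rw [hβ, hd_def]
    rw [inv_eq_one_div]
    field_simp
    ring
  have h1d0 : (0:ℝ) < 1 + d := by linarith
  set A := (1+d)^ℓ with hA_def
  have hAinv : (β^ℓ)⁻¹ = A := by rw [hA_def, ← inv_pow, hβinv]
  have hβA : β^ℓ = A⁻¹ := by rw [← hAinv, inv_inv]
  have hApos : 0 < A := pow_pos h1d0 ℓ
  have ht0 : 0 < β^ℓ := pow_pos hβpos ℓ
  have ht1 : β^ℓ < 1 := pow_lt_one₀ hβpos.le hβ1 (by omega)
  have hAlb : 1 + u + u*(u-d)/2 ≤ A := by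
    have h := bern2 ℓ hd0.le
    have heq : (ℓ:ℝ)*((ℓ:ℝ)-1)*(d:ℝ)^2 = u*(u-d) := by rw [hu_def]; ring
    rw [hA_def]
    rw [← hL_def] at h
    linarith [h, heq.ge, heq.le]
  have hA1 : 1 < A := by nlinarith [hAlb]
  have hAub : A ≤ 1 + u + u^2/2 + u^3/6 + u^4*(5/96) := by
    calc A ≤ (Real.exp d)^ℓ := by
          rw [hA_def]
          exact pow_le_pow_left₀ h1d0.le (by linarith [Real.add_one_le_exp d]) ℓ
      _ = Real.exp (L*d) := by rw [hL_def, ← Real.exp_nat_mul]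
      _ = Real.exp u := by rw [hu_def]
      _ ≤ _ := expUB4 hu0.le (by linarith)
  have hn_eq : n = (1+d)/d := by
    rw [eq_div_iff hd0.ne']
    linarith [hnd]
  have hs_eq : L/n * β^ℓ / (1 - β^ℓ) = u / ((1+d)*(A-1)) := by
    rw [hβA, hn_eq, hu_def]
    have hA0 : A ≠ 0 := hApos.ne'
    have hA1' : A - 1 ≠ 0 := by linarith
    have h1A : 1 - A⁻¹ ≠ 0 := by
      have : A⁻¹ < 1 := by
        rw [inv_lt_one_iff₀]
        right; exact hA1
      linarith
    field_simp
  set s := u / ((1+d)*(A-1)) with hs_def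
  have hAm1 : 0 < A - 1 := by linarith
  have hsub : 0 < (1+d)*(A-1) := mul_pos h1d0 hAm1
  have hs0 : 0 ≤ s := by positivity
  have h2ud : 0 < 2 + u - d := by linarith
  have hs_ub : s ≤ 2/((1+d)*(2+u-d)) := by
    have hA1'' : u*(2+u-d)/2 ≤ A - 1 := by linarith [hAlb]
    have hpos2 : 0 < (1+d)*(u*(2+u-d)/2) := by positivity
    calc s ≤ u/((1+d)*(u*(2+u-d)/2)) := by
          rw [hs_def]
          apply div_le_div_of_nonneg_left hu0.le hpos2
          apply mul_le_mul_of_nonneg_left hA1'' h1d0.le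
      _ = 2/((1+d)*(2+u-d)) := by
          field_simp
  rw [hs_eq, hAinv]
  clear_value s A u d L n
  clear hβ hβpos hβ1 ht0 ht1 hβA hβinv hA_def hs_def hL_def hu_def hn_def hd_def
  clear hnd hn_eq hn5 hn1 h1n hn0 h4L hL1 hs_eq hAinv hlN hl hsub hAlb
  clear hN N ℓ β L n
  rcases le_or_gt u (1/4) with hc | hc
  · -- u ≤ 1/4
    have hσ : s ≤ 2/(2+u) := by
      calc s ≤ 2/((1+d)*(2+u-d)) := hs_ub
        _ ≤ 2/(2+u) := by
            apply div_le_div_of_nonneg_left (by norm_num) (by linarith)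
            nlinarith [mul_nonneg hd0.le (by linarith : (0:ℝ) ≤ 1 + u - d)]
    have key : (1 + u + u^2/2 + u^3/6 + u^4*(5/96)) * (1+2/(2+u))^2 ≤ 4.6 := by
      have h1 : 1 + 2/(2+u) = (4+u)/(2+u) := by
        field_simp
        ring
      rw [h1, div_pow, ← mul_div_assoc, div_le_iff₀ (by positivity)]
      exact polyA hu0.le hc
    have hE0 : (0:ℝ) ≤ 1 + u + u^2/2 + u^3/6 + u^4*(5/96) := by nlinarith [pow_nonneg hu0.le 2, pow_nonneg hu0.le 3, pow_nonneg hu0.le 4]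
    have hsq : (1+s)^2 ≤ (1+2/(2+u))^2 :=
      pow_le_pow_left₀ (by linarith) (by linarith) 2
    calc A * (1+s)^2 ≤ (1 + u + u^2/2 + u^3/6 + u^4*(5/96)) * (1+2/(2+u))^2 :=
          mul_le_mul hAub hsq (by positivity) hE0
      _ ≤ 4.6 := key
  · -- u > 1/4
    have hd_ge : 4*u - 1 ≤ d := by linarith
    have hDpos : 0 < 6*u*(1-u) := by
      have h1u : (0:ℝ) < 1 - u := by linarith
      nlinarith [mul_pos hu0 h1u]
    have hσ : s ≤ 1/(6*u*(1-u)) := by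
      calc s ≤ 2/((1+d)*(2+u-d)) := hs_ub
        _ ≤ 2/(12*u*(1-u)) := by
            apply div_le_div_of_nonneg_left (by norm_num) (by linarith)
            nlinarith [mul_nonneg (by linarith : (0:ℝ) ≤ d-(4*u-1)) (by linarith : (0:ℝ) ≤ 2-3*u-d)]
        _ = 1/(6*u*(1-u)) := by
            rw [div_eq_div_iff (by linarith) hDpos.ne']
            ring
    have key : (1 + u + u^2/2 + u^3/6 + u^4*(5/96)) * (1+1/(6*u*(1-u)))^2 ≤ 4.6 := by
      have h1 : 1 + 1/(6*u*(1-u)) = (6*u*(1-u)+1)/(6*u*(1-u)) := by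
        rw [one_add_div hDpos.ne']
      rw [h1, div_pow, ← mul_div_assoc, div_le_iff₀ (by positivity)]
      exact polyB hc.le hu516
    have hE0 : (0:ℝ) ≤ 1 + u + u^2/2 + u^3/6 + u^4*(5/96) := by nlinarith [pow_nonneg hu0.le 2, pow_nonneg hu0.le 3, pow_nonneg hu0.le 4]
    have hσ0 : (0:ℝ) ≤ 1/(6*u*(1-u)) := by positivity
    have hsq : (1+s)^2 ≤ (1+1/(6*u*(1-u)))^2 :=
      pow_le_pow_left₀ (by linarith) (by linarith) 2
    calc A * (1+s)^2 ≤ (1 + u + u^2/2 + u^3/6 + u^4*(5/96)) * (1+1/(6*u*(1-u)))^2 :=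
          mul_le_mul hAub hsq (by positivity) hE0
      _ ≤ 4.6 := key

lemma expLB5 {x : ℝ} (h0 : 0 ≤ x) :
    1 + x + x^2/2 + x^3/6 + x^4/24 ≤ Real.exp x := by
  have h := Real.sum_le_exp_of_nonneg h0 5
  simp [Finset.sum_range_succ, Nat.factorial] at h
  nlinarith [h]

lemma log54_lb : (2231/10000 : ℝ) ≤ Real.log (5/4) := by
  rw [Real.le_log_iff_exp_le (by norm_num)]
  nlinarith [expUB4 (x := 2231/10000) (by norm_num) (by norm_num)]

lemma log54_ub : Real.log (5/4) ≤ (22315/100000 : ℝ) := by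
  rw [Real.log_le_iff_le_exp (by norm_num)]
  nlinarith [expLB5 (x := 22315/100000) (by norm_num)]

lemma rhs_ge : (4.6 : ℝ) ≤ ((5 / 4 : ℝ) ^ (5 / 4 : ℝ)) *
    (1 + (5 / 4) * Real.log (5 / 4) / ((5 / 4 : ℝ) ^ (5 / 4 : ℝ) - 1)) ^ 2 := by
  have hlb := log54_lb
  have hub := log54_ub
  have hr : (5/4:ℝ) ^ (5/4:ℝ) = Real.exp (Real.log (5/4) * (5/4)) :=
    Real.rpow_def_of_pos (by norm_num) _
  set r := (5/4:ℝ) ^ (5/4:ℝ) with hrdef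
  have hr1 : (13216/10000 : ℝ) ≤ r := by
    rw [hr]
    calc (13216/10000 : ℝ) ≤ 1 + (278875/1000000:ℝ) + (278875/1000000:ℝ)^2/2
          + (278875/1000000:ℝ)^3/6 + (278875/1000000:ℝ)^4/24 := by norm_num
      _ ≤ Real.exp (278875/1000000) := expLB5 (by norm_num)
      _ ≤ Real.exp (Real.log (5/4) * (5/4)) := Real.exp_le_exp.2 (by linarith)
  have hr2 : r ≤ (13218/10000 : ℝ) := by
    rw [hr]
    calc Real.exp (Real.log (5/4) * (5/4)) ≤ Real.exp (27893750/100000000) :=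
          Real.exp_le_exp.2 (by linarith)
      _ ≤ 1 + (27893750/100000000:ℝ) + (27893750/100000000:ℝ)^2/2
          + (27893750/100000000:ℝ)^3/6 + (27893750/100000000:ℝ)^4*(5/96) :=
          expUB4 (by norm_num) (by norm_num)
      _ ≤ (13218/10000 : ℝ) := by norm_num
  have h1 : (0:ℝ) < r - 1 := by linarith
  have hq : (278875/1000000 : ℝ)/(3218/10000) ≤ (5/4) * Real.log (5/4) / (r - 1) := by
    gcongr <;> linarith
  have hq0 : (0:ℝ) ≤ (278875/1000000 : ℝ)/(3218/10000) := by norm_num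
  calc (4.6:ℝ) ≤ (13216/10000) * (1 + (278875/1000000 : ℝ)/(3218/10000))^2 := by norm_num
    _ ≤ r * (1 + (5/4) * Real.log (5/4) / (r - 1))^2 := by
        apply mul_le_mul hr1 (by nlinarith [hq]) (by positivity) (by linarith)

/-- The corner-point inequality of Appendix A.2 (proof of the 4.7 gap,
Theorem 9): for an integer `N ≥ 5`, an integer `ℓ` with `1 ≤ ℓ` and `4ℓ ≤ N`,
and `β = 1 - 1/N`, one has
`β^{-ℓ} (1 + (ℓ/N) β^ℓ/(1-β^ℓ))² < 4.7`, and in particular this quantity is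
at most `(5/4)^{5/4} (1 + (5/4)·ln(5/4)/((5/4)^{5/4} - 1))² ≈ 4.607`. -/
theorem stmt_10 (N ℓ : ℕ) (hN : 5 ≤ N) (hl : 1 ≤ ℓ) (hlN : 4 * ℓ ≤ N)
    (β : ℝ) (hβ : β = 1 - 1 / (N : ℝ)) :
    (β ^ ℓ)⁻¹ * (1 + ((ℓ : ℝ) / (N : ℝ)) * β ^ ℓ / (1 - β ^ ℓ)) ^ 2 < 4.7 ∧
      (β ^ ℓ)⁻¹ * (1 + ((ℓ : ℝ) / (N : ℝ)) * β ^ ℓ / (1 - β ^ ℓ)) ^ 2 ≤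
        ((5 / 4 : ℝ) ^ (5 / 4 : ℝ)) *
          (1 + (5 / 4) * Real.log (5 / 4) / ((5 / 4 : ℝ) ^ (5 / 4 : ℝ) - 1)) ^ 2 := by
  have h := main_bound N ℓ hN hl hlN β hβ
  exact ⟨lt_of_le_of_lt h (by norm_num), h.trans rhs_ge⟩
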